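/- arXiv:2008.05990 — 2 statements merged into one kernel-verified Lean document; each statement's English description precedes it below -/
import Mathlib

section
/- Let V be a regular vine and let e ∈ E_k be an edge joining vertices v_1, v_2 ∈ V_k. Then the conditioning set D_e = U_{v_1} ∩ U_{v_2} has exactly k - 1 elements, and the conditioned sets a_e = U_{v_1} \ D_e and b_e = U_{v_2} \ D_e are singletons. Consequently U_e = {a_e} ∪ {b_e} ∪ D_e is a disjoint union. -/
open Finset

variable {α : Type*} [DecidableEq α] [Fintype α]

/-- The simple graph on `α` induced by a finite set of unordered pairs. -/
def graphOf (E : Finset (Sym2 α)) : SimpleGraph α where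
  Adj x y := x ≠ y ∧ s(x, y) ∈ E
  symm := ⟨by
    intro x y h
    refine ⟨h.1.symm, ?_⟩
    rw [Sym2.eq_swap]
    exact h.2⟩
  loopless := ⟨fun x h => h.1 rfl⟩

/-- `(V, E)` is a finite tree: edges join distinct vertices of `V`, the induced
graph is acyclic, and all vertices of `V` are mutually reachable. -/
def IsTreeOn (V : Finset α) (E : Finset (Sym2 α)) : Prop :=
  (∀ e ∈ E, ∀ x ∈ e, x ∈ V) ∧ (∀ e ∈ E, ¬ e.IsDiag) ∧
    (graphOf E).IsAcyclic ∧ ∀ x ∈ V, ∀ y ∈ V, (graphOf E).Reachable x y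

/-- Complete union of an edge: the union of the complete unions of its endpoints
(each vertex of a tree of the vine is identified with its complete union). -/
def eUnion (e : Sym2 (Finset α)) : Finset α :=
  Sym2.lift ⟨fun A B => A ∪ B, fun A B => union_comm A B⟩ e

/-- Conditioning set `D_e` of an edge. -/
def condSet (e : Sym2 (Finset α)) : Finset α :=
  Sym2.lift ⟨fun A B => A ∩ B, fun A B => inter_comm A B⟩ e

/-- Conditioned set `{a_e, b_e}` of an edge. -/
def condPair (e : Sym2 (Finset α)) : Finset α :=
  Sym2.lift ⟨fun A B => symmDiff A B, fun A B => symmDiff_comm A B⟩ e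

/-- A regular vine on a finite set `α` of `d = Fintype.card α` elements.  The
vertices of tree `k` (for `k = 1, …, d-1`) are identified with their complete
unions, subsets of `α`; `V (k+1) = E k` is expressed via complete unions. -/
structure RegularVine (α : Type*) [DecidableEq α] [Fintype α] where
  V : ℕ → Finset (Finset α)
  E : ℕ → Finset (Sym2 (Finset α))
  hV1 : V 1 = Finset.univ.image (fun a : α => ({a} : Finset α))
  hVsucc : ∀ k, 1 ≤ k → V (k + 1) = (E k).image eUnion
  tree : ∀ k, 1 ≤ k → k + 1 ≤ Fintype.card α → IsTreeOn (V k) (E k)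
  hEzero : ∀ k, k = 0 ∨ Fintype.card α ≤ k → E k = ∅
  proximity : ∀ k, 1 ≤ k → ∀ p ∈ E (k + 1),
    ∃ a ∈ E k, ∃ b ∈ E k, p = s(eUnion a, eUnion b) ∧ ∃ v, v ∈ a ∧ v ∈ b

/-- A tree `(V, E)` is a path: it is a tree and every vertex has degree at most 2. -/
def IsPathOn (V : Finset α) (E : Finset (Sym2 α)) : Prop :=
  IsTreeOn V E ∧ ∀ v ∈ V, (E.filter (fun e => v ∈ e)).card ≤ 2

/-- A permutation `(i_1, …, i_d) = (σ 0, …, σ (d-1))` is compatible with a vine on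
`Fin d`: for every `k` there is an edge of tree `k` with conditioned set
`{σ k, σ r}` (some `r < k`) and conditioning set `{σ 0, …, σ (k-1)} \ {σ r}`. -/
def Compatible {d : ℕ} (𝒱 : RegularVine (Fin d)) (σ : Fin d → Fin d) : Prop :=
  ∀ k : Fin d, 1 ≤ (k : ℕ) → ∃ r : Fin d, r < k ∧ ∃ e ∈ 𝒱.E (k : ℕ),
    condPair e = {σ k, σ r} ∧
    condSet e = ((Finset.univ.filter (fun s : Fin d => s < k)).image σ).erase (σ r)


lemma eUnion_mk (A B : Finset α) : eUnion s(A, B) = A ∪ B := rfl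

lemma subset_eUnion_of_mem {v : Finset α} {a : Sym2 (Finset α)} (h : v ∈ a) :
    v ⊆ eUnion a := by
  induction a using Sym2.ind with
  | _ x y =>
    rw [Sym2.mem_iff] at h
    rcases h with rfl | rfl
    · exact subset_union_left
    · exact subset_union_right

lemma inter_card_lt {β : Type*} [DecidableEq β] {A B : Finset β} {n : ℕ}
    (hA : A.card = n) (hB : B.card = n) (hne : A ≠ B) : (A ∩ B).card < n := by
  rcases lt_or_eq_of_le (hA ▸ card_le_card (inter_subset_left : A ∩ B ⊆ A)) with h | h
  · exact h
  · exfalso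
    have h1 : A ∩ B = A := eq_of_subset_of_card_le inter_subset_left (by omega)
    have h2 : A ⊆ B := h1 ▸ inter_subset_right
    exact hne (eq_of_subset_of_card_le h2 (by omega))

lemma vine_key {d : ℕ} (𝒱 : RegularVine (Fin d)) : ∀ k,
    (1 ≤ k → k + 1 ≤ d → ∀ u ∈ 𝒱.V k, u.card = k) ∧
    (1 ≤ k → k + 1 ≤ d → ∀ e ∈ 𝒱.E k, ∀ v₁ v₂ : Finset (Fin d),
      e = s(v₁, v₂) → (v₁ ∩ v₂).card = k - 1) := by
  have hcard : Fintype.card (Fin d) = d := Fintype.card_fin d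
  intro k
  induction k with
  | zero => exact ⟨fun h => absurd h (by omega), fun h => absurd h (by omega)⟩
  | succ k ih =>
    rcases Nat.eq_zero_or_pos k with rfl | hk1
    · -- level 1
      constructor
      · intro _ _ u hu
        rw [𝒱.hV1] at hu
        obtain ⟨a, -, rfl⟩ := mem_image.mp hu
        simp
      · intro _ hd e he v₁ v₂ heq
        have htree := 𝒱.tree 1 le_rfl (by omega)
        have hv₁ : v₁ ∈ 𝒱.V 1 := htree.1 _ he v₁ (heq ▸ Sym2.mem_mk_left _ _)
        have hv₂ : v₂ ∈ 𝒱.V 1 := htree.1 _ he v₂ (heq ▸ Sym2.mem_mk_right _ _)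
        have hne : v₁ ≠ v₂ := by
          have := htree.2.1 _ he
          rw [heq, Sym2.mk_isDiag_iff] at this
          exact this
        have c1 : v₁.card = 1 := by
          rw [𝒱.hV1] at hv₁; obtain ⟨a, -, rfl⟩ := mem_image.mp hv₁; simp
        have c2 : v₂.card = 1 := by
          rw [𝒱.hV1] at hv₂; obtain ⟨a, -, rfl⟩ := mem_image.mp hv₂; simp
        have := inter_card_lt c1 c2 hne
        omega
    · -- level k+1, k ≥ 1
      have hEk := ih.2 hk1
      have hVk := ih.1 hk1
      have vertexCard : k + 1 ≤ d → ∀ u ∈ 𝒱.V (k + 1), u.card = k + 1 := by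
        intro hd u hu
        rw [𝒱.hVsucc k hk1] at hu
        obtain ⟨a, ha, rfl⟩ := mem_image.mp hu
        have htree := 𝒱.tree k hk1 (by omega)
        induction a using Sym2.ind with
        | _ x y =>
          have hx : x.card = k := hVk (by omega) x (htree.1 _ ha x (Sym2.mem_mk_left _ _))
          have hy : y.card = k := hVk (by omega) y (htree.1 _ ha y (Sym2.mem_mk_right _ _))
          have hxy : (x ∩ y).card = k - 1 := hEk (by omega) _ ha x y rfl
          have := card_union_add_card_inter x y
          rw [eUnion_mk]
          omega
      refine ⟨fun _ hd => vertexCard (by omega), ?_⟩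
      intro _ hd e he v₁ v₂ heq
      obtain ⟨a, ha, b, hb, hpe, v, hva, hvb⟩ := 𝒱.proximity k hk1 e he
      have htreek := 𝒱.tree k hk1 (by omega)
      have htreek1 := 𝒱.tree (k + 1) (by omega) (by omega)
      have hvV : v ∈ 𝒱.V k := htreek.1 _ ha v hva
      have hvcard : v.card = k := hVk (by omega) v hvV
      have hAmem : eUnion a ∈ 𝒱.V (k + 1) := by
        rw [𝒱.hVsucc k hk1]; exact mem_image_of_mem _ ha
      have hBmem : eUnion b ∈ 𝒱.V (k + 1) := by
        rw [𝒱.hVsucc k hk1]; exact mem_image_of_mem _ hb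
      have hAcard : (eUnion a).card = k + 1 := vertexCard (by omega) _ hAmem
      have hBcard : (eUnion b).card = k + 1 := vertexCard (by omega) _ hBmem
      have hsub : v ⊆ eUnion a ∩ eUnion b :=
        subset_inter (subset_eUnion_of_mem hva) (subset_eUnion_of_mem hvb)
      have hge : k ≤ (eUnion a ∩ eUnion b).card := hvcard ▸ card_le_card hsub
      have hne : eUnion a ≠ eUnion b := by
        have hdiag := htreek1.2.1 e he
        rw [hpe, Sym2.mk_isDiag_iff] at hdiag
        exact hdiag
      have hlt := inter_card_lt hAcard hBcard hne
      have hinter : v₁ ∩ v₂ = eUnion a ∩ eUnion b := by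
        rw [heq] at hpe
        rcases Sym2.eq_iff.mp hpe with ⟨h1, h2⟩ | ⟨h1, h2⟩
        · rw [h1, h2]
        · rw [h1, h2, inter_comm]
      rw [hinter]
      omega

/-- For an edge `e ∈ E_k` joining vertices `v₁, v₂` (identified with their complete
unions), the conditioning set `D_e = U_{v₁} ∩ U_{v₂}` has `k - 1` elements, the
conditioned sets `U_{v₁} \ D_e` and `U_{v₂} \ D_e` are singletons, and
`U_e = {a_e} ∪ {b_e} ∪ D_e` is a disjoint union. -/
theorem vine_conditioned_conditioning_cards {d : ℕ} (𝒱 : RegularVine (Fin d)) :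
    ∀ k, 1 ≤ k → k ≤ d - 1 → ∀ e ∈ 𝒱.E k, ∀ v₁ v₂ : Finset (Fin d),
      e = s(v₁, v₂) →
      (v₁ ∩ v₂).card = k - 1 ∧
      (v₁ \ (v₁ ∩ v₂)).card = 1 ∧ (v₂ \ (v₁ ∩ v₂)).card = 1 ∧
      eUnion e = (v₁ \ (v₁ ∩ v₂)) ∪ (v₂ \ (v₁ ∩ v₂)) ∪ (v₁ ∩ v₂) ∧
      Disjoint (v₁ \ (v₁ ∩ v₂)) (v₂ \ (v₁ ∩ v₂)) ∧
      Disjoint (v₁ \ (v₁ ∩ v₂)) (v₁ ∩ v₂) ∧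
      Disjoint (v₂ \ (v₁ ∩ v₂)) (v₁ ∩ v₂) := by
  intro k hk1 hk e he v₁ v₂ heq
  have hd : k + 1 ≤ d := by omega
  have htree := 𝒱.tree k hk1 (by simpa using hd)
  have hv₁ : v₁.card = k :=
    (vine_key 𝒱 k).1 hk1 hd v₁ (htree.1 _ he v₁ (heq ▸ Sym2.mem_mk_left _ _))
  have hv₂ : v₂.card = k :=
    (vine_key 𝒱 k).1 hk1 hd v₂ (htree.1 _ he v₂ (heq ▸ Sym2.mem_mk_right _ _))
  have hD : (v₁ ∩ v₂).card = k - 1 := (vine_key 𝒱 k).2 hk1 hd e he v₁ v₂ heq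
  refine ⟨hD, ?_, ?_, ?_, ?_, sdiff_disjoint, sdiff_disjoint⟩
  · rw [card_sdiff_of_subset inter_subset_left]; omega
  · rw [card_sdiff_of_subset inter_subset_right]; omega
  · rw [heq, eUnion_mk]
    ext x
    simp only [mem_union, mem_sdiff, mem_inter]
    tauto
  · rw [disjoint_left]
    intro x hx hy
    simp only [mem_sdiff, mem_inter] at hx hy
    tauto
end

section
/- For any d-dimensional regular vine V and any starting index i_1 ∈ {1, ..., d}, there exists at least one permutation (i_1, i_2, ..., i_d) of (1, ..., d) that is compatible with V. Consequently, every d-dimensional vine admits at least d compatible permutations. -/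
open Finset

variable {α : Type*} [DecidableEq α] [Fintype α]

section VineAux

lemma reach_adj {G : SimpleGraph α} {x y : α} (h : G.Reachable x y) (hne : x ≠ y) :
    ∃ z, G.Adj x z := by
  obtain ⟨w⟩ := h
  cases w with
  | nil => exact absurd rfl hne
  | cons h w => exact ⟨_, h⟩

lemma card_V {d : ℕ} (𝒱 : RegularVine (Fin d)) :
    ∀ k, 1 ≤ k → k ≤ d → ∀ A ∈ 𝒱.V k, A.card = k := by
  intro k
  induction k using Nat.strong_induction_on with
  | _ k ih =>
    intro hk1 hkd A hA
    match k, hk1, hkd, hA, ih with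
    | 1, _, _, hA, _ =>
      rw [𝒱.hV1] at hA
      obtain ⟨a, -, rfl⟩ := Finset.mem_image.mp hA
      exact Finset.card_singleton a
    | (n+2), _, hkd, hA, ih =>
      rw [𝒱.hVsucc (n+1) (by omega)] at hA
      obtain ⟨e, he, rfl⟩ := Finset.mem_image.mp hA
      induction e using Sym2.ind with
      | _ P Q =>
        have ht := 𝒱.tree (n+1) (by omega) (by rw [Fintype.card_fin]; omega)
        have hP : P ∈ 𝒱.V (n+1) := ht.1 _ he P (Sym2.mem_mk_left P Q)
        have hQ : Q ∈ 𝒱.V (n+1) := ht.1 _ he Q (Sym2.mem_mk_right P Q)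
        have hne : P ≠ Q := fun h => ht.2.1 _ he (Sym2.mk_isDiag_iff.mpr h)
        have cardP : P.card = n+1 := ih (n+1) (by omega) (by omega) (by omega) P hP
        have cardQ : Q.card = n+1 := ih (n+1) (by omega) (by omega) (by omega) Q hQ
        -- lower bound for union via intersection card
        have hint : (P ∩ Q).card ≤ n := by
          by_contra hcon
          push_neg at hcon
          have h1 : P ⊆ Q := by
            have hPQ : P ∩ Q = P :=
              Finset.eq_of_subset_of_card_le Finset.inter_subset_left (by omega)
            intro x hx
            exact Finset.mem_inter.mp (hPQ ▸ hx) |>.2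
          exact hne (Finset.eq_of_subset_of_card_le h1 (by omega))
        have hsum := Finset.card_union_add_card_inter P Q
        -- upper bound
        have hup : (P ∪ Q).card ≤ n + 2 := by
          cases n with
          | zero =>
            calc (P ∪ Q).card ≤ P.card + Q.card := Finset.card_union_le P Q
            _ ≤ 2 := by omega
          | succ m =>
            obtain ⟨a, ha, b, hb, heq, v, hva, hvb⟩ := 𝒱.proximity (m+1) (by omega) _ he
            have key : ∀ A B : Finset (Fin d), A ∈ 𝒱.V (m+2) → B ∈ 𝒱.V (m+2) →
                v ⊆ A → v ⊆ B → (A ∪ B).card ≤ m + 3 := by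
              intro A B hAm hBm hvA hvB
              have htm := 𝒱.tree (m+1) (by omega) (by rw [Fintype.card_fin]; omega)
              have hvV : v ∈ 𝒱.V (m+1) := htm.1 _ ha v ((Sym2.mem_iff_exists.mp hva).choose_spec ▸
                Sym2.mem_mk_left _ _)
              have cardv : v.card = m+1 := ih (m+1) (by omega) (by omega) (by omega) v hvV
              have cardA : A.card = m+2 := ih (m+2) (by omega) (by omega) (by omega) A hAm
              have cardB : B.card = m+2 := ih (m+2) (by omega) (by omega) (by omega) B hBm
              have hsub : A ∪ B ⊆ A ∪ (B \ v) := by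
                intro x hx
                rcases Finset.mem_union.mp hx with h | h
                · exact Finset.mem_union_left _ h
                · by_cases hxv : x ∈ v
                  · exact Finset.mem_union_left _ (hvA hxv)
                  · exact Finset.mem_union_right _ (Finset.mem_sdiff.mpr ⟨h, hxv⟩)
              calc (A ∪ B).card ≤ (A ∪ (B \ v)).card := Finset.card_le_card hsub
                _ ≤ A.card + (B \ v).card := Finset.card_union_le _ _
                _ = (m+2) + (B.card - v.card) := by rw [cardA, Finset.card_sdiff_of_subset hvB]
                _ ≤ m + 3 := by omega
            have hvsubA : v ⊆ eUnion a := by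
              obtain ⟨x, rfl⟩ := Sym2.mem_iff_exists.mp hva
              exact Finset.subset_union_left
            have hvsubB : v ⊆ eUnion b := by
              obtain ⟨y, rfl⟩ := Sym2.mem_iff_exists.mp hvb
              exact Finset.subset_union_left
            rcases Sym2.eq_iff.mp heq with ⟨h1, h2⟩ | ⟨h1, h2⟩
            · rw [h1, h2]; exact key _ _ (h1 ▸ hP) (h2 ▸ hQ) hvsubA hvsubB
            · rw [h1, h2]
              rw [Finset.union_comm]
              exact key _ _ (h2 ▸ hQ) (h1 ▸ hP) hvsubA hvsubB
        show (P ∪ Q).card = n + 2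
        omega

lemma cover {d : ℕ} (𝒱 : RegularVine (Fin d)) :
    ∀ k, 1 ≤ k → k + 1 ≤ d → ∀ j : Fin d, ∃ A ∈ 𝒱.V k, j ∈ A := by
  intro k
  induction k with
  | zero => omega
  | succ n ihn =>
    intro _ hkd j
    cases n with
    | zero =>
      refine ⟨{j}, ?_, Finset.mem_singleton_self j⟩
      rw [𝒱.hV1]
      exact Finset.mem_image.mpr ⟨j, Finset.mem_univ j, rfl⟩
    | succ m =>
      obtain ⟨A, hA, hjA⟩ := ihn (by omega) (by omega) j
      have hcard : A.card = m+1 := card_V 𝒱 (m+1) (by omega) (by omega) A hA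
      have hex : ∃ j' : Fin d, j' ∉ A := by
        by_contra h
        push_neg at h
        have hsub : (Finset.univ : Finset (Fin d)) ⊆ A := fun x _ => h x
        have := Finset.card_le_card hsub
        rw [Finset.card_univ, Fintype.card_fin, hcard] at this
        omega
      obtain ⟨j', hj'⟩ := hex
      obtain ⟨T, hT, hj'T⟩ := ihn (by omega) (by omega) j'
      have hne : A ≠ T := fun h => hj' (h ▸ hj'T)
      have ht := 𝒱.tree (m+1) (by omega) (by rw [Fintype.card_fin]; omega)
      obtain ⟨X, hadj⟩ := reach_adj (ht.2.2.2 A hA T hT) hne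
      refine ⟨A ∪ X, ?_, Finset.mem_union_left _ hjA⟩
      rw [𝒱.hVsucc (m+1) (by omega)]
      exact Finset.mem_image.mpr ⟨s(A, X), hadj.2, rfl⟩

lemma build {d : ℕ} (𝒱 : RegularVine (Fin d)) (i₁ : Fin d) :
    ∀ k, 1 ≤ k → k ≤ d → ∃ f : ℕ → Fin d,
      f 0 = i₁ ∧ Set.InjOn f (Set.Iio k) ∧ ((Finset.range k).image f ∈ 𝒱.V k) ∧
      ∀ m, 1 ≤ m → m < k → ∃ r, r < m ∧ ∃ e ∈ 𝒱.E m,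
        condPair e = {f m, f r} ∧
        condSet e = (((Finset.range m).image f).erase (f r)) := by
  intro k
  induction k with
  | zero => omega
  | succ n ihn =>
    intro _ hkd
    rcases Nat.eq_zero_or_pos n with rfl | hn
    · refine ⟨fun _ => i₁, rfl, ?_, ?_, ?_⟩
      · intro x hx y hy _
        simp only [Set.mem_Iio] at hx hy
        omega
      · have h1 : (Finset.range 1).image (fun _ : ℕ => i₁) = {i₁} := by simp
        rw [h1, 𝒱.hV1]
        exact Finset.mem_image.mpr ⟨i₁, Finset.mem_univ _, rfl⟩
      · intro m hm1 hm; omega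
    · obtain ⟨f, hf0, hinj, hmem, hcompat⟩ := ihn hn (by omega)
      set S := (Finset.range n).image f with hSdef
      have hcardS : S.card = n := card_V 𝒱 n hn (by omega) S hmem
      have hex : ∃ j : Fin d, j ∉ S := by
        by_contra h
        push_neg at h
        have hsub : (Finset.univ : Finset (Fin d)) ⊆ S := fun x _ => h x
        have := Finset.card_le_card hsub
        rw [Finset.card_univ, Fintype.card_fin, hcardS] at this
        omega
      obtain ⟨j, hj⟩ := hex
      obtain ⟨T, hT, hjT⟩ := cover 𝒱 n hn (by omega) j
      have hneST : S ≠ T := fun h => hj (h ▸ hjT)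
      have ht := 𝒱.tree n hn (by rw [Fintype.card_fin]; omega)
      obtain ⟨X, hadj⟩ := reach_adj (ht.2.2.2 S hmem T hT) hneST
      have heE : s(S, X) ∈ 𝒱.E n := hadj.2
      have hX : X ∈ 𝒱.V n := ht.1 _ heE X (Sym2.mem_mk_right S X)
      have hcardX : X.card = n := card_V 𝒱 n hn (by omega) X hX
      have hU : S ∪ X ∈ 𝒱.V (n+1) := by
        rw [𝒱.hVsucc n hn]
        exact Finset.mem_image.mpr ⟨s(S, X), heE, rfl⟩
      have hcardU : (S ∪ X).card = n + 1 := card_V 𝒱 (n+1) (by omega) hkd _ hU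
      have hic : (S ∩ X).card + 1 = n := by
        have := Finset.card_union_add_card_inter S X
        omega
      have hUS : ((S ∪ X) \ S).card = 1 := by
        rw [Finset.card_sdiff_of_subset Finset.subset_union_left]
        omega
      obtain ⟨j', hj'⟩ := Finset.card_eq_one.mp hUS
      have hj'mem : j' ∈ (S ∪ X) \ S := hj' ▸ Finset.mem_singleton_self j'
      have hj'S : j' ∉ S := (Finset.mem_sdiff.mp hj'mem).2
      have hj'X : j' ∈ X := by
        rcases Finset.mem_union.mp (Finset.mem_sdiff.mp hj'mem).1 with h | h
        · exact absurd h hj'S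
        · exact h
      have hUeq : S ∪ X = insert j' S := by
        have h1 := Finset.union_sdiff_of_subset (Finset.subset_union_left : S ⊆ S ∪ X)
        rw [hj'] at h1
        rw [← h1, Finset.union_comm, ← Finset.insert_eq]
      have hSd : (S \ (S ∩ X)).card = 1 := by
        rw [Finset.card_sdiff_of_subset Finset.inter_subset_left]
        omega
      obtain ⟨a, ha⟩ := Finset.card_eq_one.mp hSd
      have hamem : a ∈ S \ (S ∩ X) := ha ▸ Finset.mem_singleton_self a
      have haS : a ∈ S := (Finset.mem_sdiff.mp hamem).1
      have haX : a ∉ X := fun h =>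
        (Finset.mem_sdiff.mp hamem).2 (Finset.mem_inter.mpr ⟨haS, h⟩)
      have hSX' : S ∩ X = S.erase a := by
        have h1 : S \ (S \ (S ∩ X)) = S ∩ X :=
          Finset.sdiff_sdiff_eq_self Finset.inter_subset_left
        rw [ha] at h1
        rw [Finset.erase_eq, h1]
      have hsymm : symmDiff S X = {j', a} := by
        ext x
        simp only [Finset.mem_symmDiff, Finset.mem_insert, Finset.mem_singleton]
        constructor
        · rintro (⟨hxS, hxX⟩ | ⟨hxX, hxS⟩)
          · right
            have hx : x ∈ S \ (S ∩ X) :=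
              Finset.mem_sdiff.mpr ⟨hxS, fun h => hxX (Finset.mem_inter.mp h).2⟩
            rw [ha] at hx
            exact Finset.mem_singleton.mp hx
          · left
            have hx : x ∈ (S ∪ X) \ S :=
              Finset.mem_sdiff.mpr ⟨Finset.mem_union_right _ hxX, hxS⟩
            rw [hj'] at hx
            exact Finset.mem_singleton.mp hx
        · rintro (rfl | rfl)
          · exact Or.inr ⟨hj'X, hj'S⟩
          · exact Or.inl ⟨haS, haX⟩
      obtain ⟨r, hrmem, hfr⟩ := Finset.mem_image.mp haS
      have hrn : r < n := Finset.mem_range.mp hrmem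
      set f' := Function.update f n j' with hf'def
      have hflt : ∀ m, m < n → f' m = f m := fun m hm =>
        Function.update_of_ne (by omega) _ _
      have hfn : f' n = j' := Function.update_self _ _ _
      have himg : ∀ m, m ≤ n → (Finset.range m).image f' = (Finset.range m).image f := by
        intro m hm
        apply Finset.image_congr
        intro x hx
        have hxm : x < m := Finset.mem_range.mp hx
        exact hflt x (by omega)
      have hSf' : (Finset.range n).image f' = S := himg n le_rfl
      have himg' : (Finset.range (n+1)).image f' = S ∪ X := by
        rw [Finset.range_add_one, Finset.image_insert, hfn, hSf', hUeq]
      refine ⟨f', ?_, ?_, ?_, ?_⟩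
      · rw [hflt 0 hn]; exact hf0
      · intro x hx y hy hxy
        simp only [Set.mem_Iio] at hx hy
        rcases Nat.lt_succ_iff_lt_or_eq.mp hx with hx' | rfl <;>
          rcases Nat.lt_succ_iff_lt_or_eq.mp hy with hy' | rfl
        · exact hinj (Set.mem_Iio.mpr hx') (Set.mem_Iio.mpr hy')
            (by rwa [hflt x hx', hflt y hy'] at hxy)
        · exfalso
          rw [hflt x hx', hfn] at hxy
          exact hj'S (hxy ▸ Finset.mem_image.mpr ⟨x, Finset.mem_range.mpr hx', rfl⟩)
        · exfalso
          rw [hflt y hy', hfn] at hxy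
          exact hj'S (hxy ▸ Finset.mem_image.mpr ⟨y, Finset.mem_range.mpr hy', rfl⟩)
        · rfl
      · rw [himg']; exact hU
      · intro m hm1 hmk
        rcases Nat.lt_succ_iff_lt_or_eq.mp hmk with hm | rfl
        · obtain ⟨r', hr', e, he, hp, hs⟩ := hcompat m hm1 hm
          refine ⟨r', hr', e, he, ?_, ?_⟩
          · rw [hflt m hm, hflt r' (lt_trans hr' hm)]; exact hp
          · rw [himg m (le_of_lt hm), hflt r' (lt_trans hr' hm)]; exact hs
        · refine ⟨r, hrn, s(S, X), heE, ?_, ?_⟩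
          · show symmDiff S X = {f' m, f' r}
            rw [hsymm, hfn, hflt r hrn, hfr]
          · show S ∩ X = ((Finset.range m).image f').erase (f' r)
            rw [hSf', hflt r hrn, hfr, hSX']

end VineAux

/-- For any `d`-dimensional regular vine and any starting index `i₁`, there exists a
permutation `(i₁, i₂, …, i_d)` compatible with the vine; consequently every vine
admits at least `d` compatible permutations. -/
theorem exists_compatible_permutation {d : ℕ} (𝒱 : RegularVine (Fin d)) :
    (∀ i₁ : Fin d, ∃ σ : Fin d → Fin d, Function.Bijective σ ∧
      σ ⟨0, i₁.pos⟩ = i₁ ∧ Compatible 𝒱 σ) ∧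
    d ≤ {σ : Fin d → Fin d | Function.Bijective σ ∧ Compatible 𝒱 σ}.ncard := by
  have main : ∀ i₁ : Fin d, ∃ σ : Fin d → Fin d, Function.Bijective σ ∧
      σ ⟨0, i₁.pos⟩ = i₁ ∧ Compatible 𝒱 σ := by
    intro i₁
    obtain ⟨f, hf0, hinj, -, hcompat⟩ := build 𝒱 i₁ d i₁.pos le_rfl
    refine ⟨fun i => f i.val, ?_, hf0, ?_⟩
    · have hinj' : Function.Injective (fun i : Fin d => f i.val) := fun x y h =>
        Fin.ext (hinj (Set.mem_Iio.mpr x.isLt) (Set.mem_Iio.mpr y.isLt) h)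
      exact Finite.injective_iff_bijective.mp hinj'
    · intro k hk
      obtain ⟨r', hr', e, he, hp, hs⟩ := hcompat k.val hk k.isLt
      refine ⟨⟨r', lt_trans hr' k.isLt⟩, hr', e, he, hp, ?_⟩
      have himg : (Finset.univ.filter (fun s : Fin d => s < k)).image
          (fun i : Fin d => f i.val) = (Finset.range k.val).image f := by
        ext x
        simp only [Finset.mem_image, Finset.mem_filter, Finset.mem_univ, true_and,
          Finset.mem_range]
        constructor
        · rintro ⟨s, hs', rfl⟩; exact ⟨s.val, hs', rfl⟩
        · rintro ⟨m, hm, rfl⟩; exact ⟨⟨m, lt_trans hm k.isLt⟩, hm, rfl⟩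
      rw [himg]; exact hs
  refine ⟨main, ?_⟩
  choose g hg1 hg2 hg3 using main
  have hginj : Function.Injective g := by
    intro x y h
    have hx := hg2 x
    rw [h] at hx
    exact hx.symm.trans (hg2 y)
  have hsub : Set.range g ⊆ {σ : Fin d → Fin d | Function.Bijective σ ∧ Compatible 𝒱 σ} := by
    rintro _ ⟨i, rfl⟩
    exact ⟨hg1 i, hg3 i⟩
  have h1 : (Set.range g).ncard = d := by
    rw [← Set.image_univ, Set.ncard_image_of_injective _ hginj, Set.ncard_univ,
      Nat.card_eq_fintype_card, Fintype.card_fin]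
  exact le_trans (le_of_eq h1.symm) (Set.ncard_le_ncard hsub (Set.toFinite _))
end
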